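/- Weak duality for the penalized SDP: let A, B₁, …, B_m be n×n real symmetric matrices, b ∈ ℝ^m, σ > 0 and η ∈ ℝ. Suppose X is an n×n symmetric positive semidefinite matrix with ⟨X, Bᵢ⟩ = bᵢ for i = 1,…,p and ⟨X, B_j⟩ ≤ b_j for j = p+1,…,m, and suppose u ∈ ℝ^m satisfies u_j ≥ 0 for j = p+1,…,m. Then, with C(u) = A + Σᵢ uᵢ Bᵢ, the dual value −(1/(4σ))‖C(u)₋‖_F² − uᵀb − ση² is at most the primal value ⟨X, A⟩ + σ(‖X‖_F² − η²). -/

import Mathlib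

open Matrix

/-- Frobenius norm of a real square matrix: `‖X‖_F = sqrt (trace (Xᵀ * X))`. -/
noncomputable def frobNorm {n : ℕ} (X : Matrix (Fin n) (Fin n) ℝ) : ℝ :=
  Real.sqrt (Matrix.trace (Xᵀ * X))

/-- The positive part `X₊ = ∑_{λᵢ > 0} λᵢ pᵢ pᵢᵀ` of a real symmetric matrix `X`,
built from an orthonormal eigenbasis `pᵢ` with eigenvalues `λᵢ` (junk value `0` if
`X` is not symmetric). -/
noncomputable def matPosPart {n : ℕ} (X : Matrix (Fin n) (Fin n) ℝ) :
    Matrix (Fin n) (Fin n) ℝ :=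
  if hX : X.IsHermitian then
    ∑ i, if 0 < hX.eigenvalues i then
      hX.eigenvalues i •
        Matrix.vecMulVec (fun j => hX.eigenvectorBasis i j) (fun j => hX.eigenvectorBasis i j)
    else 0
  else 0

/-- The negative part `X₋ = ∑_{λᵢ < 0} λᵢ pᵢ pᵢᵀ` of a real symmetric matrix `X`
(junk value `0` if `X` is not symmetric). -/
noncomputable def matNegPart {n : ℕ} (X : Matrix (Fin n) (Fin n) ℝ) :
    Matrix (Fin n) (Fin n) ℝ :=
  if hX : X.IsHermitian then
    ∑ i, if hX.eigenvalues i < 0 then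
      hX.eigenvalues i •
        Matrix.vecMulVec (fun j => hX.eigenvectorBasis i j) (fun j => hX.eigenvectorBasis i j)
    else 0
  else 0

lemma real_conjT {n : ℕ} (M : Matrix (Fin n) (Fin n) ℝ) : Mᴴ = Mᵀ := by
  ext i j; simp [conjTranspose_apply]

lemma psd_trace_nonneg {n : ℕ} {M : Matrix (Fin n) (Fin n) ℝ} (h : M.PosSemidef) :
    0 ≤ Matrix.trace M := by
  rw [Matrix.trace]
  refine Finset.sum_nonneg fun i _ => ?_
  have := h.dotProduct_mulVec_nonneg (Pi.single i 1)
  simpa [dotProduct, mulVec, Pi.single_apply, Finset.sum_ite_eq, diag] using this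

lemma psd_trace_mul_nonneg {n : ℕ} {X M : Matrix (Fin n) (Fin n) ℝ}
    (hX : X.PosSemidef) (hM : M.PosSemidef) : 0 ≤ Matrix.trace (X * M) := by
  open scoped MatrixOrder in obtain ⟨B, rfl⟩ := CStarAlgebra.nonneg_iff_eq_star_mul_self.mp hX.nonneg
  rw [Matrix.mul_assoc, Matrix.trace_mul_comm]
  exact psd_trace_nonneg (hM.mul_mul_conjTranspose_same B)

lemma psd_vecMulVec {n : ℕ} (v : Fin n → ℝ) : (Matrix.vecMulVec v v).PosSemidef := by
  have h : Matrix.vecMulVec v v = (Matrix.replicateRow Unit v)ᴴ * Matrix.replicateRow Unit v := by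
    ext i j; simp [Matrix.vecMulVec_apply, Matrix.mul_apply, Matrix.replicateRow_apply,
      Matrix.conjTranspose_apply]
  rw [h]; exact Matrix.posSemidef_conjTranspose_mul_self _

lemma herm_smul {n : ℕ} {M : Matrix (Fin n) (Fin n) ℝ} (h : M.IsHermitian) (r : ℝ) :
    (r • M).IsHermitian := by
  unfold Matrix.IsHermitian at *
  rw [conjTranspose_smul, h]; simp

lemma psd_smul {n : ℕ} {M : Matrix (Fin n) (Fin n) ℝ} (hM : M.PosSemidef) {c : ℝ}
    (hc : 0 ≤ c) : (c • M).PosSemidef := by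
  refine .of_dotProduct_mulVec_nonneg (herm_smul hM.1 c) fun x => ?_
  have := hM.dotProduct_mulVec_nonneg x
  simp only [smul_mulVec, dotProduct_smul, smul_eq_mul] at *
  exact mul_nonneg hc this

lemma psd_sum {n : ℕ} {ι : Type*} (s : Finset ι) (f : ι → Matrix (Fin n) (Fin n) ℝ)
    (h : ∀ i ∈ s, (f i).PosSemidef) : (∑ i ∈ s, f i).PosSemidef :=
  Finset.sum_induction f _ (fun _ _ ha hb => ha.add hb) Matrix.PosSemidef.zero h

lemma spectral_sum {n : ℕ} {C : Matrix (Fin n) (Fin n) ℝ} (hC : C.IsHermitian) :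
    C = ∑ i, hC.eigenvalues i •
      Matrix.vecMulVec (fun j => hC.eigenvectorBasis i j) (fun j => hC.eigenvectorBasis i j) := by
  conv_lhs => rw [hC.spectral_theorem]
  ext j k
  simp [Matrix.mul_apply, Matrix.mul_diagonal, Matrix.conjTranspose_apply,
    Matrix.sum_apply, Matrix.vecMulVec_apply]
  refine Finset.sum_congr rfl fun i _ => ?_
  rw [show (∑ x, hC.eigenvectorBasis x j * Matrix.diagonal hC.eigenvalues x i)
      = hC.eigenvectorBasis i j * hC.eigenvalues i by
    simp [Matrix.diagonal_apply, mul_ite, mul_zero, Finset.sum_ite_eq']]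
  ring

lemma matNegPart_eq {n : ℕ} {C : Matrix (Fin n) (Fin n) ℝ} (hC : C.IsHermitian) :
    matNegPart C = ∑ i, if hC.eigenvalues i < 0 then
      hC.eigenvalues i •
        Matrix.vecMulVec (fun j => hC.eigenvectorBasis i j) (fun j => hC.eigenvectorBasis i j)
    else 0 := by
  rw [matNegPart, dif_pos hC]

lemma psd_neg_negPart {n : ℕ} {C : Matrix (Fin n) (Fin n) ℝ} (hC : C.IsHermitian) :
    (-(matNegPart C)).PosSemidef := by
  rw [matNegPart_eq hC, ← Finset.sum_neg_distrib]
  refine psd_sum _ _ fun i _ => ?_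
  by_cases h : hC.eigenvalues i < 0
  · rw [if_pos h, ← neg_smul]
    exact psd_smul (psd_vecMulVec _) (by linarith)
  · rw [if_neg h, neg_zero]; exact Matrix.PosSemidef.zero

lemma psd_sub_negPart {n : ℕ} {C : Matrix (Fin n) (Fin n) ℝ} (hC : C.IsHermitian) :
    (C - matNegPart C).PosSemidef := by
  have : C - matNegPart C = ∑ i, if hC.eigenvalues i < 0 then 0 else
      hC.eigenvalues i •
        Matrix.vecMulVec (fun j => hC.eigenvectorBasis i j) (fun j => hC.eigenvectorBasis i j) := by
    rw [matNegPart_eq hC]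
    nth_rewrite 1 [spectral_sum hC]
    rw [← Finset.sum_sub_distrib]
    refine Finset.sum_congr rfl fun i _ => ?_
    by_cases h : hC.eigenvalues i < 0 <;> simp [h]
  rw [this]
  refine psd_sum _ _ fun i _ => ?_
  by_cases h : hC.eigenvalues i < 0
  · rw [if_pos h]; exact Matrix.PosSemidef.zero
  · rw [if_neg h]; exact psd_smul (psd_vecMulVec _) (le_of_not_gt h)

lemma negPart_herm {n : ℕ} {C : Matrix (Fin n) (Fin n) ℝ} (hC : C.IsHermitian) :
    (matNegPart C).IsHermitian := by
  have h := (psd_neg_negPart hC).isHermitian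
  unfold Matrix.IsHermitian at *
  rw [conjTranspose_neg] at h
  exact neg_injective h

/-- weak duality for the penalized SDP.  With symmetric data matrices
A, B₁, …, B_m, a primal-feasible X (p.s.d., equality constraints ⟨X, Bᵢ⟩ = bᵢ for i ≤ p,
inequality constraints ⟨X, Bⱼ⟩ ≤ bⱼ for p < j ≤ m) and a dual-feasible u (uⱼ ≥ 0 on the
inequality constraints), the dual value −(1/(4σ))‖C(u)₋‖_F² − uᵀb − ση² is at most the
penalized primal value ⟨X, A⟩ + σ(‖X‖_F² − η²), where C(u) = A + ∑ᵢ uᵢ Bᵢ. -/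
theorem sdcut_weak_duality {n m p : ℕ} (hpm : p ≤ m)
    (A : Matrix (Fin n) (Fin n) ℝ) (hA : A.IsHermitian)
    (B : Fin m → Matrix (Fin n) (Fin n) ℝ) (hB : ∀ i, (B i).IsHermitian)
    (b u : Fin m → ℝ) (σ η : ℝ) (hσ : 0 < σ)
    (X : Matrix (Fin n) (Fin n) ℝ) (hX : X.PosSemidef)
    (heq : ∀ i : Fin m, (i : ℕ) < p → Matrix.trace (Xᵀ * B i) = b i)
    (hineq : ∀ j : Fin m, p ≤ (j : ℕ) → Matrix.trace (Xᵀ * B j) ≤ b j)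
    (hu : ∀ j : Fin m, p ≤ (j : ℕ) → 0 ≤ u j) :
    -(1 / (4 * σ)) *
        Matrix.trace ((matNegPart (A + ∑ i, u i • B i))ᵀ * matNegPart (A + ∑ i, u i • B i)) -
      (∑ i, u i * b i) - σ * η ^ 2 ≤
    Matrix.trace (Xᵀ * A) + σ * (Matrix.trace (Xᵀ * X) - η ^ 2) := by
  set C : Matrix (Fin n) (Fin n) ℝ := A + ∑ i, u i • B i with hCdef
  have hC : C.IsHermitian := by
    rw [hCdef]
    refine hA.add ?_
    unfold Matrix.IsHermitian
    rw [conjTranspose_sum]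
    exact Finset.sum_congr rfl fun i _ => herm_smul (hB i) (u i)
  set N : Matrix (Fin n) (Fin n) ℝ := matNegPart C with hNdef
  have hXT : Xᵀ = X := by rw [← real_conjT]; exact hX.1
  have hNT : Nᵀ = N := by rw [← real_conjT]; exact negPart_herm hC
  simp only [hXT, hNT] at heq hineq ⊢
  -- abbreviations
  set x2 := Matrix.trace (X * X) with hx2
  set q := Matrix.trace (N * N) with hq
  set xn := Matrix.trace (X * N) with hxn
  set a := Matrix.trace (X * A) with ha
  -- fact 1: trace (X * C) = a + ∑ u i * trace (X * B i)
  have h1 : Matrix.trace (X * C) = a + ∑ i, u i * Matrix.trace (X * B i) := by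
    rw [hCdef, Matrix.mul_add, Matrix.trace_add, Matrix.mul_sum, Matrix.trace_sum]
    congr 1
    refine Finset.sum_congr rfl fun i _ => ?_
    rw [mul_smul_comm, Matrix.trace_smul, smul_eq_mul]
  -- fact 2
  have h2 : ∑ i, u i * Matrix.trace (X * B i) ≤ ∑ i, u i * b i := by
    refine Finset.sum_le_sum fun i _ => ?_
    by_cases hi : (i : ℕ) < p
    · rw [heq i hi]
    · exact mul_le_mul_of_nonneg_left (hineq i (le_of_not_gt hi)) (hu i (le_of_not_gt hi))
  -- fact 3 : xn ≤ trace (X * C)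
  have h3 : xn ≤ Matrix.trace (X * C) := by
    have := psd_trace_mul_nonneg hX (psd_sub_negPart hC)
    rw [Matrix.mul_sub, Matrix.trace_sub] at this
    linarith [this]
  -- fact 4 : quadratic inequality
  have hq0 : 0 ≤ q := by
    have := psd_trace_mul_nonneg (psd_neg_negPart hC) (psd_neg_negPart hC)
    rwa [neg_mul_neg] at this
  set t : ℝ := 1 / (2 * σ) with ht
  have h4 : 0 ≤ x2 + 2 * t * xn + t ^ 2 * q := by
    have h0 : 0 ≤ Matrix.trace ((X + t • N)ᴴ * (X + t • N)) :=
      psd_trace_nonneg (Matrix.posSemidef_conjTranspose_mul_self _)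
    rw [real_conjT, Matrix.transpose_add, hXT, Matrix.transpose_smul, hNT] at h0
    have hexp : Matrix.trace ((X + t • N) * (X + t • N))
        = x2 + 2 * t * xn + t ^ 2 * q := by
      simp only [Matrix.add_mul, Matrix.mul_add, Matrix.trace_add, Matrix.smul_mul,
        Matrix.mul_smul, smul_smul, Matrix.trace_smul, smul_eq_mul,
        Matrix.trace_mul_comm N X]
      ring
    linarith [h0, hexp ▸ h0]
  -- key: -(1/(4σ)) q ≤ σ x2 + xn
  have key : -(1 / (4 * σ)) * q ≤ σ * x2 + xn := by
    have hmul : 0 ≤ σ * (x2 + 2 * t * xn + t ^ 2 * q) := mul_nonneg hσ.le h4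
    have he : σ * (x2 + 2 * t * xn + t ^ 2 * q) = σ * x2 + xn + 1 / (4 * σ) * q := by
      rw [ht]; field_simp; ring
    linarith [he ▸ hmul]
  linarith [key, h3, h1 ▸ h3, h2]
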